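/- (SANIA, uncorrelated prior.) Fix a design p and a network g. For each unit i let σ_i : {0,1} × {0,1,…,d_i} → ℝ be strictly positive (the prior variance of the observed outcome of unit i as a function of its own treatment and treated degree, under a mean-zero prior uncorrelated across units), and let π_i(a,d) := ∑_z p(z) 1{z_i = a, d_i^z = d}. Define, for d ∈ {0,…,d_i}, C_{i,d} = (σ_i(0,d)/π_i(0,d) + σ_i(1,d)/π_i(1,d))^{−1} if both π_i(0,d) > 0 and π_i(1,d) > 0, and C_{i,d} = 0 otherwise; assume ∑_{d} C_{i,d} > 0 for every i (equivalently, linear unbiased estimators exist). Consider minimizing IV(w) = ∑_z p(z) ∑_i w_i(z)² σ_i(z_i, d_i^z) over all weights w satisfying, for every unit i, (C1) ∑_z p(z) w_i(z) z_i = 1/n, (C2) ∑_z p(z) w_i(z) = 0, and (C3′) ∑_z p(z) w_i(z) 1{d_i^z = d} = 0 for every d ∈ {1,…,d_i}. Then the weights w*_i(z) = (C_{i,d_i^z}/∑_d C_{i,d}) · (2z_i − 1)/(n π_i(z_i, d_i^z)) (interpreted as 0 whenever C_{i,d_i^z} = 0) satisfy the constraints and minimize IV: for every w satisfying the constraints,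 IV(w*) ≤ IV(w). -/

import Mathlib

open Finset
open scoped Classical

/-- Treated degree of unit `i` under allocation `z`. -/
def trDeg {n : ℕ} (g : Fin n → Fin n → Bool) (z : Fin n → Bool) (i : Fin n) : ℕ :=
  (Finset.univ.filter fun j => g j i = true ∧ z j = true).card

/-- Degree of unit `i`. -/
def deg {n : ℕ} (g : Fin n → Fin n → Bool) (i : Fin n) : ℕ :=
  (Finset.univ.filter fun j => g j i = true).card

lemma trDeg_le {n : ℕ} (g : Fin n → Fin n → Bool) (z : Fin n → Bool) (i : Fin n) :
    trDeg g z i ≤ deg g i := by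
  apply Finset.card_le_card
  intro j hj
  simp only [Finset.mem_filter] at *
  tauto

lemma trDeg_mem {n : ℕ} (g : Fin n → Fin n → Bool) (z : Fin n → Bool) (i : Fin n) :
    trDeg g z i ∈ Finset.range (deg g i + 1) := by
  simp [Nat.lt_succ_iff, trDeg_le]

lemma group_sum {n : ℕ} (g : Fin n → Fin n → Bool) (p : (Fin n → Bool) → ℝ)
    (i : Fin n) (f : Bool → ℕ → ℝ) :
    ∑ z, p z * f (z i) (trDeg g z i)
      = ∑ d ∈ Finset.range (deg g i + 1),
        ((∑ z, p z * (if z i = false ∧ trDeg g z i = d then (1:ℝ) else 0)) * f false d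
         + (∑ z, p z * (if z i = true ∧ trDeg g z i = d then (1:ℝ) else 0)) * f true d) := by
  simp_rw [Finset.sum_mul, ← Finset.sum_add_distrib]
  rw [Finset.sum_comm]
  refine Finset.sum_congr rfl fun z _ => ?_
  rw [Finset.sum_eq_single_of_mem (trDeg g z i) (trDeg_mem g z i)]
  · cases h : z i <;> simp [h]
  · intro d _ hd
    simp [Ne.symm hd, hd]

lemma aux_val (Cd S nr πa e : ℝ) (hS : S ≠ 0) (hnr : nr ≠ 0) (hp : Cd ≠ 0 → πa ≠ 0) :
    πa * ((Cd / S) * e / (nr * πa)) = e * Cd / (S * nr) := by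
  by_cases h : Cd = 0
  · simp [h]
  · have hπ := hp h
    field_simp

lemma aux_val2 (σ0 σ1 π0 π1 S nr : ℝ) (hσ0 : 0 < σ0) (hσ1 : 0 < σ1)
    (hπ0 : 0 < π0) (hπ1 : 0 < π1) (hS : S ≠ 0) (hnr : nr ≠ 0) :
    ((σ0/π0 + σ1/π1)⁻¹ / S) * ((2:ℝ) - 1) / (nr * π1) * σ1
      = ((σ0/π0 + σ1/π1)⁻¹ / S) * ((0:ℝ) - 1) / (nr * π0) * σ0 + (S * nr)⁻¹ := by
  have hsum : σ0/π0 + σ1/π1 ≠ 0 := by positivity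
  field_simp
  ring

/-- SANIA, uncorrelated prior: the weights
`w*ᵢ(z) = (C_{i,dᵢ^z}/∑_d C_{i,d}) (2zᵢ-1)/(n πᵢ(zᵢ, dᵢ^z))` satisfy the SANIA
unbiasedness constraints C1, C2, C3′ and minimize
`IV(w) = ∑_z p(z) ∑ᵢ wᵢ(z)² σᵢ(zᵢ, dᵢ^z)` among all weights satisfying them. -/
theorem stmt_15 (n : ℕ) (hn : 1 ≤ n)
    (g : Fin n → Fin n → Bool) (hg : ∀ i, g i i = false)
    (p : (Fin n → Bool) → ℝ) (hp0 : ∀ z, 0 ≤ p z) (hp1 : ∑ z, p z = 1)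
    (σ : Fin n → Bool → ℕ → ℝ) (hσ : ∀ i a d, 0 < σ i a d)
    (π : Fin n → Bool → ℕ → ℝ)
    (hπ : ∀ i a d, π i a d =
      ∑ z, p z * (if z i = a ∧ trDeg g z i = d then (1 : ℝ) else 0))
    (C : Fin n → ℕ → ℝ)
    (hC : ∀ i d, C i d =
      if 0 < π i false d ∧ 0 < π i true d
      then (σ i false d / π i false d + σ i true d / π i true d)⁻¹
      else 0)
    (hCpos : ∀ i, 0 < ∑ d ∈ Finset.range (deg g i + 1), C i d)
    (wstar : Fin n → (Fin n → Bool) → ℝ)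
    (hws : ∀ i z, wstar i z =
      (C i (trDeg g z i) / ∑ d ∈ Finset.range (deg g i + 1), C i d) *
        ((if z i then (2 : ℝ) else 0) - 1) / ((n : ℝ) * π i (z i) (trDeg g z i))) :
    ((∀ i : Fin n,
        (∑ z, p z * wstar i z * (if z i then (1 : ℝ) else 0)) = 1 / (n : ℝ) ∧
        (∑ z, p z * wstar i z) = 0 ∧
        (∀ d : ℕ, 1 ≤ d → d ≤ deg g i →
          (∑ z, p z * wstar i z * (if trDeg g z i = d then (1 : ℝ) else 0)) = 0)) ∧
      (∀ w : Fin n → (Fin n → Bool) → ℝ,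
        (∀ i : Fin n,
          (∑ z, p z * w i z * (if z i then (1 : ℝ) else 0)) = 1 / (n : ℝ) ∧
          (∑ z, p z * w i z) = 0 ∧
          (∀ d : ℕ, 1 ≤ d → d ≤ deg g i →
            (∑ z, p z * w i z * (if trDeg g z i = d then (1 : ℝ) else 0)) = 0)) →
        (∑ z, p z * ∑ i, (wstar i z) ^ 2 * σ i (z i) (trDeg g z i)) ≤
          (∑ z, p z * ∑ i, (w i z) ^ 2 * σ i (z i) (trDeg g z i)))) := by
  have hnne : (n : ℝ) ≠ 0 := Nat.cast_ne_zero.mpr (by omega)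
  have hSne : ∀ i, (∑ d ∈ Finset.range (deg g i + 1), C i d) ≠ 0 :=
    fun i => ne_of_gt (hCpos i)
  -- grouping lemma in terms of π
  have hπg : ∀ (i : Fin n) (f : Bool → ℕ → ℝ),
      ∑ z, p z * f (z i) (trDeg g z i)
        = ∑ d ∈ Finset.range (deg g i + 1),
            (π i false d * f false d + π i true d * f true d) := by
    intro i f
    rw [group_sum g p i f]
    exact Finset.sum_congr rfl fun d _ => by rw [hπ i false d, hπ i true d]
  have hπnn : ∀ i (a : Bool) d, 0 ≤ π i a d := by
    intro i a d
    rw [hπ]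
    refine Finset.sum_nonneg fun z _ => mul_nonneg (hp0 z) ?_
    split <;> norm_num
  have hπz : ∀ i (a : Bool) d, π i a d = 0 → ∀ z, z i = a → trDeg g z i = d → p z = 0 := by
    intro i a d h z hz1 hz2
    rw [hπ] at h
    have hnn : ∀ x ∈ (Finset.univ : Finset (Fin n → Bool)),
        0 ≤ p x * (if x i = a ∧ trDeg g x i = d then (1:ℝ) else 0) := by
      intro x _
      refine mul_nonneg (hp0 x) ?_
      split <;> norm_num
    have := (Finset.sum_eq_zero_iff_of_nonneg hnn).mp h z (Finset.mem_univ z)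
    simpa [hz1, hz2] using this
  have hCcond : ∀ i d, C i d ≠ 0 →
      (0 < π i false d ∧ 0 < π i true d) ∧
        C i d = (σ i false d / π i false d + σ i true d / π i true d)⁻¹ := by
    intro i d hd
    by_cases h : (0 < π i false d ∧ 0 < π i true d)
    · exact ⟨h, by rw [hC i d, if_pos h]⟩
    · rw [hC i d, if_neg h] at hd
      exact absurd rfl hd
  -- key value computation
  have hval : ∀ (i : Fin n) (a : Bool) d,
      π i a d * ((C i d / ∑ d' ∈ Finset.range (deg g i + 1), C i d') *
          ((if a then (2:ℝ) else 0) - 1) / ((n:ℝ) * π i a d))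
        = ((if a then (2:ℝ) else 0) - 1) * C i d /
            ((∑ d' ∈ Finset.range (deg g i + 1), C i d') * (n:ℝ)) := by
    intro i a d
    refine aux_val _ _ _ _ _ (hSne i) hnne ?_
    intro h
    rcases (hCcond i d h).1 with ⟨h0, h1⟩
    cases a
    · exact ne_of_gt h0
    · exact ne_of_gt h1
  have hPart1 : ∀ i : Fin n,
      (∑ z, p z * wstar i z * (if z i then (1 : ℝ) else 0)) = 1 / (n : ℝ) ∧
      (∑ z, p z * wstar i z) = 0 ∧
      (∀ d : ℕ, 1 ≤ d → d ≤ deg g i →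
        (∑ z, p z * wstar i z * (if trDeg g z i = d then (1 : ℝ) else 0)) = 0) := by
    intro i
    refine ⟨?_, ?_, ?_⟩
    · -- C1
      have h1 : ∑ z, p z * wstar i z * (if z i then (1 : ℝ) else 0)
          = ∑ z, p z * ((fun (a : Bool) (d : ℕ) =>
              ((C i d / ∑ d' ∈ Finset.range (deg g i + 1), C i d') *
                ((if a then (2:ℝ) else 0) - 1) / ((n:ℝ) * π i a d)) *
              (if a then (1:ℝ) else 0)) (z i) (trDeg g z i)) :=
        Finset.sum_congr rfl fun z _ => by rw [hws i z]; ring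
      rw [h1, hπg i (fun (a : Bool) (d : ℕ) =>
        ((C i d / ∑ d' ∈ Finset.range (deg g i + 1), C i d') *
          ((if a then (2:ℝ) else 0) - 1) / ((n:ℝ) * π i a d)) *
        (if a then (1:ℝ) else 0))]
      have h2 : ∀ d ∈ Finset.range (deg g i + 1),
          (π i false d * (((C i d / ∑ d' ∈ Finset.range (deg g i + 1), C i d') *
              ((if false then (2:ℝ) else 0) - 1) / ((n:ℝ) * π i false d)) *
              (if false then (1:ℝ) else 0))
           + π i true d * (((C i d / ∑ d' ∈ Finset.range (deg g i + 1), C i d') *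
              ((if true then (2:ℝ) else 0) - 1) / ((n:ℝ) * π i true d)) *
              (if true then (1:ℝ) else 0)))
          = C i d / ((∑ d' ∈ Finset.range (deg g i + 1), C i d') * (n:ℝ)) := by
        intro d _
        rw [← mul_assoc, ← mul_assoc, hval i false d, hval i true d]
        norm_num
      rw [Finset.sum_congr rfl h2, ← Finset.sum_div]
      rw [div_eq_div_iff (mul_ne_zero (hSne i) hnne) hnne]
      ring
    · -- C2
      have h1 : ∑ z, p z * wstar i z
          = ∑ z, p z * ((fun (a : Bool) (d : ℕ) =>
              ((C i d / ∑ d' ∈ Finset.range (deg g i + 1), C i d') *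
                ((if a then (2:ℝ) else 0) - 1) / ((n:ℝ) * π i a d))) (z i) (trDeg g z i)) :=
        Finset.sum_congr rfl fun z _ => by rw [hws i z]
      rw [h1, hπg i (fun (a : Bool) (d : ℕ) =>
        ((C i d / ∑ d' ∈ Finset.range (deg g i + 1), C i d') *
          ((if a then (2:ℝ) else 0) - 1) / ((n:ℝ) * π i a d)))]
      refine Finset.sum_eq_zero fun d _ => ?_
      rw [hval i false d, hval i true d]
      norm_num
      ring
    · -- C3'
      intro d0 hd1 hd2
      have h1 : ∑ z, p z * wstar i z * (if trDeg g z i = d0 then (1 : ℝ) else 0)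
          = ∑ z, p z * ((fun (a : Bool) (d : ℕ) =>
              ((C i d / ∑ d' ∈ Finset.range (deg g i + 1), C i d') *
                ((if a then (2:ℝ) else 0) - 1) / ((n:ℝ) * π i a d)) *
              (if d = d0 then (1:ℝ) else 0)) (z i) (trDeg g z i)) :=
        Finset.sum_congr rfl fun z _ => by rw [hws i z]; ring
      rw [h1, hπg i (fun (a : Bool) (d : ℕ) =>
        ((C i d / ∑ d' ∈ Finset.range (deg g i + 1), C i d') *
          ((if a then (2:ℝ) else 0) - 1) / ((n:ℝ) * π i a d)) *
        (if d = d0 then (1:ℝ) else 0))]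
      refine Finset.sum_eq_zero fun d _ => ?_
      rw [← mul_assoc, ← mul_assoc, hval i false d, hval i true d]
      by_cases h : d = d0 <;> simp [h] <;> ring
  refine ⟨hPart1, ?_⟩
  intro w hw
  have swap : ∀ (v : Fin n → (Fin n → Bool) → ℝ),
      ∑ z, p z * ∑ i, (v i z) ^ 2 * σ i (z i) (trDeg g z i)
        = ∑ i, ∑ z, p z * ((v i z) ^ 2 * σ i (z i) (trDeg g z i)) := by
    intro v
    simp_rw [Finset.mul_sum]
    rw [Finset.sum_comm]
  rw [swap wstar, swap w]
  refine Finset.sum_le_sum fun i _ => ?_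
  set u : (Fin n → Bool) → ℝ := fun z => w i z - wstar i z with hu
  have huz : ∀ z, w i z = wstar i z + u z := fun z => by simp [hu]
  obtain ⟨hw1, hw2, hw3⟩ := hw i
  obtain ⟨hs1c, hs2c, hs3c⟩ := hPart1 i
  have hu1 : ∑ z, p z * u z * (if z i then (1:ℝ) else 0) = 0 := by
    have h : ∑ z, p z * u z * (if z i then (1:ℝ) else 0)
        = ∑ z, (p z * w i z * (if z i then (1:ℝ) else 0)
            - p z * wstar i z * (if z i then (1:ℝ) else 0)) :=
      Finset.sum_congr rfl fun z _ => by simp only [hu]; ring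
    rw [h, Finset.sum_sub_distrib, hw1, hs1c, sub_self]
  have hu2 : ∑ z, p z * u z = 0 := by
    have h : ∑ z, p z * u z = ∑ z, (p z * w i z - p z * wstar i z) :=
      Finset.sum_congr rfl fun z _ => by simp only [hu]; ring
    rw [h, Finset.sum_sub_distrib, hw2, hs2c, sub_self]
  have hu3 : ∀ d : ℕ, 1 ≤ d → d ≤ deg g i →
      ∑ z, p z * u z * (if trDeg g z i = d then (1:ℝ) else 0) = 0 := by
    intro d h1 h2
    have h : ∑ z, p z * u z * (if trDeg g z i = d then (1:ℝ) else 0)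
        = ∑ z, (p z * w i z * (if trDeg g z i = d then (1:ℝ) else 0)
            - p z * wstar i z * (if trDeg g z i = d then (1:ℝ) else 0)) :=
      Finset.sum_congr rfl fun z _ => by simp only [hu]; ring
    rw [h, Finset.sum_sub_distrib, hw3 d h1 h2, hs3c d h1 h2, sub_self]
  have hm : ∀ d ∈ Finset.range (deg g i + 1),
      ∑ z, p z * u z * (if trDeg g z i = d then (1:ℝ) else 0) = 0 := by
    intro d hd
    rcases Nat.eq_zero_or_pos d with h0 | h1
    · subst h0
      have htot : ∑ d' ∈ Finset.range (deg g i + 1),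
          ∑ z, p z * u z * (if trDeg g z i = d' then (1:ℝ) else 0) = 0 := by
        rw [Finset.sum_comm]
        calc ∑ z, ∑ d' ∈ Finset.range (deg g i + 1),
              p z * u z * (if trDeg g z i = d' then (1:ℝ) else 0)
            = ∑ z, p z * u z := Finset.sum_congr rfl fun z _ => by
              rw [← Finset.mul_sum, Finset.sum_ite_eq, if_pos (trDeg_mem g z i), mul_one]
          _ = 0 := hu2
      have hrest : ∑ d' ∈ (Finset.range (deg g i + 1)).erase 0,
          (∑ z, p z * u z * (if trDeg g z i = d' then (1:ℝ) else 0)) = 0 :=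
        Finset.sum_eq_zero fun d' hd' => hu3 d'
          (Nat.one_le_iff_ne_zero.mpr (Finset.ne_of_mem_erase hd'))
          (by have h := Finset.mem_of_mem_erase hd'; rw [Finset.mem_range] at h; omega)
      have hadd := Finset.add_sum_erase (Finset.range (deg g i + 1))
        (fun d' => ∑ z, p z * u z * (if trDeg g z i = d' then (1:ℝ) else 0)) hd
      simp only [hrest, htot, add_zero] at hadd
      exact hadd
    · exact hu3 d h1 (by rw [Finset.mem_range] at hd; omega)
  have hH4 : ∀ h : ℕ → ℝ, ∑ z, p z * u z * h (trDeg g z i) = 0 := by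
    intro h
    have step : ∀ z : Fin n → Bool, p z * u z * h (trDeg g z i)
        = ∑ d ∈ Finset.range (deg g i + 1),
            p z * u z * (if trDeg g z i = d then (1:ℝ) else 0) * h d := by
      intro z
      rw [Finset.sum_eq_single_of_mem (trDeg g z i) (trDeg_mem g z i)
        (fun b _ hb => by simp [Ne.symm hb])]
      simp
    calc ∑ z, p z * u z * h (trDeg g z i)
        = ∑ z, ∑ d ∈ Finset.range (deg g i + 1),
            p z * u z * (if trDeg g z i = d then (1:ℝ) else 0) * h d :=
          Finset.sum_congr rfl fun z _ => step z
      _ = ∑ d ∈ Finset.range (deg g i + 1),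
            (∑ z, p z * u z * (if trDeg g z i = d then (1:ℝ) else 0)) * h d := by
          rw [Finset.sum_comm]
          exact Finset.sum_congr rfl fun d _ => (Finset.sum_mul _ _ _).symm
      _ = 0 := Finset.sum_eq_zero fun d hd => by rw [hm d hd, zero_mul]
  have hs1tot : ∑ d ∈ Finset.range (deg g i + 1),
      (∑ z, p z * u z * (if z i = true ∧ trDeg g z i = d then (1:ℝ) else 0)) = 0 := by
    rw [Finset.sum_comm]
    calc ∑ z, ∑ d ∈ Finset.range (deg g i + 1),
          p z * u z * (if z i = true ∧ trDeg g z i = d then (1:ℝ) else 0)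
        = ∑ z, p z * u z * (if z i then (1:ℝ) else 0) :=
          Finset.sum_congr rfl fun z _ => by
            cases h : z i
            · simp [h]
            · rw [Finset.sum_eq_single_of_mem (trDeg g z i) (trDeg_mem g z i)
                (fun b _ hb => by simp [Ne.symm hb])]
              simp [h]
      _ = 0 := hu1
  have hs1z : ∀ d ∈ Finset.range (deg g i + 1), C i d = 0 →
      ∑ z, p z * u z * (if z i = true ∧ trDeg g z i = d then (1:ℝ) else 0) = 0 := by
    intro d hd hCd
    have hnp : π i false d = 0 ∨ π i true d = 0 := by
      by_contra hcon
      push_neg at hcon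
      obtain ⟨hf, ht⟩ := hcon
      have hfp : 0 < π i false d := lt_of_le_of_ne (hπnn i false d) (Ne.symm hf)
      have htp : 0 < π i true d := lt_of_le_of_ne (hπnn i true d) (Ne.symm ht)
      have hne : C i d ≠ 0 := by
        rw [hC i d, if_pos ⟨hfp, htp⟩]
        have h0 := hσ i false d
        have h1 := hσ i true d
        positivity
      exact hne hCd
    rcases hnp with hf | ht
    · have hs0 : ∑ z, p z * u z * (if z i = false ∧ trDeg g z i = d then (1:ℝ) else 0) = 0 :=
        Finset.sum_eq_zero fun z _ => by
          by_cases hz : z i = false ∧ trDeg g z i = d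
          · rw [hπz i false d hf z hz.1 hz.2]
            simp
          · simp [hz]
      have hsplit : (∑ z, p z * u z * (if z i = false ∧ trDeg g z i = d then (1:ℝ) else 0))
          + ∑ z, p z * u z * (if z i = true ∧ trDeg g z i = d then (1:ℝ) else 0)
          = ∑ z, p z * u z * (if trDeg g z i = d then (1:ℝ) else 0) := by
        rw [← Finset.sum_add_distrib]
        exact Finset.sum_congr rfl fun z _ => by cases h : z i <;> simp [h]
      have hmd := hm d hd
      linarith
    · exact Finset.sum_eq_zero fun z _ => by
        by_cases hz : z i = true ∧ trDeg g z i = d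
        · rw [hπz i true d ht z hz.1 hz.2]
          simp
        · simp [hz]
  have hTsplit : ∀ (a : Bool) (d : ℕ),
      ((C i d / ∑ d' ∈ Finset.range (deg g i + 1), C i d') *
          ((if a then (2:ℝ) else 0) - 1) / ((n:ℝ) * π i a d)) * σ i a d
        = ((C i d / ∑ d' ∈ Finset.range (deg g i + 1), C i d') *
            ((if false then (2:ℝ) else 0) - 1) / ((n:ℝ) * π i false d)) * σ i false d
          + (if a then (if C i d = 0 then (0:ℝ)
              else ((∑ d' ∈ Finset.range (deg g i + 1), C i d') * (n:ℝ))⁻¹) else 0) := by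
    intro a d
    cases a
    · simp
    · by_cases hCd : C i d = 0
      · simp [hCd]
      · obtain ⟨⟨h0, h1⟩, hCeq⟩ := hCcond i d hCd
        have hiter : (if (true : Bool) then (if C i d = 0 then (0:ℝ)
            else ((∑ d' ∈ Finset.range (deg g i + 1), C i d') * (n:ℝ))⁻¹) else 0)
            = ((∑ d' ∈ Finset.range (deg g i + 1), C i d') * (n:ℝ))⁻¹ := by simp [hCd]
        rw [hiter, hCeq]
        have hav := aux_val2 (σ i false d) (σ i true d) (π i false d) (π i true d)
          (∑ d' ∈ Finset.range (deg g i + 1), C i d') (n:ℝ)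
          (hσ i false d) (hσ i true d) h0 h1 (hSne i) hnne
        simpa using hav
  have hcross : ∑ z, p z * u z * (wstar i z * σ i (z i) (trDeg g z i)) = 0 := by
    have hsplit : ∑ z, p z * u z * (wstar i z * σ i (z i) (trDeg g z i))
        = (∑ z, p z * u z *
            (((C i (trDeg g z i) / ∑ d' ∈ Finset.range (deg g i + 1), C i d') *
              ((if false then (2:ℝ) else 0) - 1) / ((n:ℝ) * π i false (trDeg g z i))) *
              σ i false (trDeg g z i)))
          + ∑ z, p z * u z * (if z i then (if C i (trDeg g z i) = 0 then (0:ℝ)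
              else ((∑ d' ∈ Finset.range (deg g i + 1), C i d') * (n:ℝ))⁻¹) else 0) := by
      rw [← Finset.sum_add_distrib]
      refine Finset.sum_congr rfl fun z _ => ?_
      rw [hws i z, hTsplit (z i) (trDeg g z i)]
      ring
    rw [hsplit]
    have hA : ∑ z, p z * u z *
        (((C i (trDeg g z i) / ∑ d' ∈ Finset.range (deg g i + 1), C i d') *
          ((if false then (2:ℝ) else 0) - 1) / ((n:ℝ) * π i false (trDeg g z i))) *
          σ i false (trDeg g z i)) = 0 :=
      hH4 (fun d => ((C i d / ∑ d' ∈ Finset.range (deg g i + 1), C i d') *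
          ((if false then (2:ℝ) else 0) - 1) / ((n:ℝ) * π i false d)) * σ i false d)
    have hB : ∑ z, p z * u z * (if z i then (if C i (trDeg g z i) = 0 then (0:ℝ)
        else ((∑ d' ∈ Finset.range (deg g i + 1), C i d') * (n:ℝ))⁻¹) else 0) = 0 := by
      have step : ∀ z : Fin n → Bool,
          (∑ d ∈ Finset.range (deg g i + 1),
              p z * u z * (if z i = true ∧ trDeg g z i = d then (1:ℝ) else 0) *
                (if C i d = 0 then (0:ℝ)
                  else ((∑ d' ∈ Finset.range (deg g i + 1), C i d') * (n:ℝ))⁻¹))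
          = p z * u z * (if z i then (if C i (trDeg g z i) = 0 then (0:ℝ)
            else ((∑ d' ∈ Finset.range (deg g i + 1), C i d') * (n:ℝ))⁻¹) else 0) := fun z =>
        (Finset.sum_eq_single_of_mem (trDeg g z i) (trDeg_mem g z i)
          (fun b _ hb => by simp [Ne.symm hb])).trans (by cases h : z i <;> simp [h])
      calc ∑ z, p z * u z * (if z i then (if C i (trDeg g z i) = 0 then (0:ℝ)
            else ((∑ d' ∈ Finset.range (deg g i + 1), C i d') * (n:ℝ))⁻¹) else 0)
          = ∑ z, ∑ d ∈ Finset.range (deg g i + 1),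
              p z * u z * (if z i = true ∧ trDeg g z i = d then (1:ℝ) else 0) *
                (if C i d = 0 then (0:ℝ)
                  else ((∑ d' ∈ Finset.range (deg g i + 1), C i d') * (n:ℝ))⁻¹) :=
            Finset.sum_congr rfl fun z _ => (step z).symm
        _ = ∑ d ∈ Finset.range (deg g i + 1),
              (∑ z, p z * u z * (if z i = true ∧ trDeg g z i = d then (1:ℝ) else 0)) *
                (if C i d = 0 then (0:ℝ)
                  else ((∑ d' ∈ Finset.range (deg g i + 1), C i d') * (n:ℝ))⁻¹) := by
            rw [Finset.sum_comm]
            exact Finset.sum_congr rfl fun d _ => (Finset.sum_mul _ _ _).symm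
        _ = ∑ d ∈ Finset.range (deg g i + 1),
              (∑ z, p z * u z * (if z i = true ∧ trDeg g z i = d then (1:ℝ) else 0)) *
                ((∑ d' ∈ Finset.range (deg g i + 1), C i d') * (n:ℝ))⁻¹ := by
            refine Finset.sum_congr rfl fun d hd => ?_
            by_cases hCd : C i d = 0
            · rw [hs1z d hd hCd]
              simp
            · rw [if_neg hCd]
        _ = 0 := by rw [← Finset.sum_mul, hs1tot, zero_mul]
    rw [hA, hB, add_zero]
  -- final assembly
  have hdecomp : ∑ z, p z * ((w i z) ^ 2 * σ i (z i) (trDeg g z i))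
      = ∑ z, p z * ((wstar i z) ^ 2 * σ i (z i) (trDeg g z i))
        + 2 * (∑ z, p z * u z * (wstar i z * σ i (z i) (trDeg g z i)))
        + ∑ z, p z * ((u z) ^ 2 * σ i (z i) (trDeg g z i)) := by
    rw [Finset.mul_sum, ← Finset.sum_add_distrib, ← Finset.sum_add_distrib]
    refine Finset.sum_congr rfl fun z _ => ?_
    rw [huz z]
    ring
  have hnnq : 0 ≤ ∑ z, p z * ((u z) ^ 2 * σ i (z i) (trDeg g z i)) :=
    Finset.sum_nonneg fun z _ => mul_nonneg (hp0 z)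
      (mul_nonneg (sq_nonneg _) (le_of_lt (hσ i (z i) (trDeg g z i))))
  rw [hdecomp, hcross]
  linarith
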